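/- arXiv:1706.07743 — 2 statements merged into one kernel-verified Lean document; each statement's English description precedes it below -/
import Mathlib

section
/- Let A be an n×n positive definite Hermitian matrix (n ≥ 1). Then tr(A⁻¹) ≤ (1/(n-1)!) · (tr A)^(n-1) / det A. -/
private lemma binom_aux (T a : ℝ) (hT : 0 ≤ T) (ha : 0 ≤ a) (k : ℕ) :
    T ^ (k + 1) + (k + 1) * T ^ k * a ≤ (T + a) ^ (k + 1) := by
  induction k with
  | zero => norm_num
  | succ k ih =>
    have h3 : 0 ≤ T ^ k := pow_nonneg hT k
    have hnn : 0 ≤ ((k : ℝ) + 1) * (T ^ k * a * a) := by positivity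
    have h2 : (T + a) * (T ^ (k + 1) + ((k : ℝ) + 1) * T ^ k * a) ≤ (T + a) ^ (k + 1 + 1) := by
      calc (T + a) * (T ^ (k + 1) + ((k : ℝ) + 1) * T ^ k * a)
          ≤ (T + a) * (T + a) ^ (k + 1) := by
            apply mul_le_mul_of_nonneg_left ih (by linarith)
        _ = (T + a) ^ (k + 1 + 1) := by ring
    have hexp : (T + a) * (T ^ (k + 1) + ((k : ℝ) + 1) * T ^ k * a)
        = T ^ (k + 1 + 1) + ((k : ℝ) + 1 + 1) * T ^ (k + 1) * a
          + ((k : ℝ) + 1) * (T ^ k * a * a) := by ring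
    push_cast
    linarith [hexp ▸ h2]

private lemma esymm_sum_le {ι : Type*} [DecidableEq ι] (s : Finset ι) (x : ι → ℝ)
    (hx : ∀ i ∈ s, 0 ≤ x i) (m : ℕ) :
    (Nat.factorial m : ℝ) * ∑ t ∈ s.powersetCard m, ∏ j ∈ t, x j
      ≤ (∑ j ∈ s, x j) ^ m := by
  induction s using Finset.induction_on generalizing m with
  | empty =>
    cases m with
    | zero => simp
    | succ k =>
      rw [Finset.powersetCard_eq_empty.2 (by simp)]
      simp [zero_pow (Nat.succ_ne_zero k)]
  | insert a s ha ih =>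
    have hxa : 0 ≤ x a := hx a (Finset.mem_insert_self a s)
    have hxs : ∀ i ∈ s, 0 ≤ x i := fun i hi => hx i (Finset.mem_insert_of_mem hi)
    have hT : 0 ≤ ∑ j ∈ s, x j := Finset.sum_nonneg hxs
    cases m with
    | zero => simp
    | succ k =>
      have hdisj : Disjoint (Finset.powersetCard (k+1) s)
          ((Finset.powersetCard k s).image (insert a)) := by
        rw [Finset.disjoint_left]
        intro t ht ht'
        obtain ⟨u, hu, rfl⟩ := Finset.mem_image.1 ht'
        exact ha ((Finset.mem_powersetCard.1 ht).1 (Finset.mem_insert_self a u))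
      have hinj : ∀ t ∈ Finset.powersetCard k s, ∀ t' ∈ Finset.powersetCard k s,
          insert a t = insert a t' → t = t' := by
        intro t ht t' ht' h
        have hat : a ∉ t := fun hh => ha ((Finset.mem_powersetCard.1 ht).1 hh)
        have hat' : a ∉ t' := fun hh => ha ((Finset.mem_powersetCard.1 ht').1 hh)
        rw [← Finset.erase_insert hat, ← Finset.erase_insert hat', h]
      have hsum : ∀ t ∈ s.powersetCard k, ∏ j ∈ insert a t, x j = x a * ∏ j ∈ t, x j := by
        intro t ht
        have hat : a ∉ t := fun h => ha ((Finset.mem_powersetCard.1 ht).1 h)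
        rw [Finset.prod_insert hat]
      have hsplit : ∑ t ∈ (insert a s).powersetCard (k+1), ∏ j ∈ t, x j
          = (∑ t ∈ s.powersetCard (k+1), ∏ j ∈ t, x j)
            + x a * ∑ t ∈ s.powersetCard k, ∏ j ∈ t, x j := by
        rw [Finset.powersetCard_succ_insert ha, Finset.sum_union hdisj, Finset.sum_image hinj,
          Finset.sum_congr rfl hsum, ← Finset.mul_sum]
      rw [hsplit, Finset.sum_insert ha]
      have ih1 := ih hxs (k + 1)
      have ih2 := ih hxs k
      have hE : 0 ≤ ∑ t ∈ s.powersetCard k, ∏ j ∈ t, x j := by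
        apply Finset.sum_nonneg
        intro t ht
        exact Finset.prod_nonneg fun j hj => hxs j ((Finset.mem_powersetCard.1 ht).1 hj)
      have key := binom_aux (∑ j ∈ s, x j) (x a) hT hxa k
      have hfact : (Nat.factorial (k+1) : ℝ) = ((k:ℝ)+1) * Nat.factorial k := by
        push_cast [Nat.factorial_succ]; ring
      have step2 : (Nat.factorial (k+1) : ℝ) * (x a * ∑ t ∈ s.powersetCard k, ∏ j ∈ t, x j)
          ≤ ((k:ℝ)+1) * (∑ j ∈ s, x j) ^ k * x a := by
        rw [hfact]
        calc ((k:ℝ)+1) * Nat.factorial k * (x a * ∑ t ∈ s.powersetCard k, ∏ j ∈ t, x j)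
            = ((k:ℝ)+1) * x a * ((Nat.factorial k : ℝ) * ∑ t ∈ s.powersetCard k, ∏ j ∈ t, x j) := by
              ring
          _ ≤ ((k:ℝ)+1) * x a * (∑ j ∈ s, x j) ^ k := by
              apply mul_le_mul_of_nonneg_left ih2 (by positivity)
          _ = ((k:ℝ)+1) * (∑ j ∈ s, x j) ^ k * x a := by ring
      have step : (Nat.factorial (k+1) : ℝ) *
          ((∑ t ∈ s.powersetCard (k+1), ∏ j ∈ t, x j) +
            x a * ∑ t ∈ s.powersetCard k, ∏ j ∈ t, x j)
          ≤ (∑ j ∈ s, x j) ^ (k+1) + ((k:ℝ)+1) * (∑ j ∈ s, x j) ^ k * x a := by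
        rw [mul_add]
        exact add_le_add ih1 step2
      calc (Nat.factorial (k+1) : ℝ) *
          ((∑ t ∈ s.powersetCard (k+1), ∏ j ∈ t, x j) +
            x a * ∑ t ∈ s.powersetCard k, ∏ j ∈ t, x j)
          ≤ (∑ j ∈ s, x j) ^ (k+1) + ((k:ℝ)+1) * (∑ j ∈ s, x j) ^ k * x a := step
        _ ≤ (∑ j ∈ s, x j + x a) ^ (k+1) := key
        _ = (x a + ∑ j ∈ s, x j) ^ (k+1) := by rw [add_comm]

/-- For an n×n positive definite (symmetric) matrix A (n ≥ 1),
tr(A⁻¹) ≤ (1/(n-1)!) · (tr A)^(n-1) / det A. -/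
theorem trace_inv_le (n : ℕ) (hn : 1 ≤ n) (A : Matrix (Fin n) (Fin n) ℝ)
    (hA : A.PosDef) :
    Matrix.trace A⁻¹ ≤ (1 / (Nat.factorial (n - 1) : ℝ)) * (Matrix.trace A) ^ (n - 1) / A.det := by
  classical
  have hH := hA.1
  set lam := hH.eigenvalues with hlam
  have hpos : ∀ i, 0 < lam i := hA.eigenvalues_pos
  set U : Matrix (Fin n) (Fin n) ℝ := (hH.eigenvectorUnitary : Matrix (Fin n) (Fin n) ℝ) with hU
  have hspec : A = U * Matrix.diagonal lam * star U := by
    have := hH.spectral_theorem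
    simpa [RCLike.ofReal_real_eq_id] using this
  have hUU : U * star U = 1 := (Matrix.mem_unitaryGroup_iff).mp hH.eigenvectorUnitary.2
  have hUU' : star U * U = 1 := (Matrix.mem_unitaryGroup_iff').mp hH.eigenvectorUnitary.2
  have htr : Matrix.trace A = ∑ i, lam i := by
    rw [hspec, Matrix.trace_mul_cycle, hUU', one_mul, Matrix.trace_diagonal]
  have hdet : A.det = ∏ i, lam i := by
    simpa using hH.det_eq_prod_eigenvalues
  have hinv : A⁻¹ = U * Matrix.diagonal (fun i => (lam i)⁻¹) * star U := by
    apply Matrix.inv_eq_right_inv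
    rw [hspec]
    calc U * Matrix.diagonal lam * star U * (U * Matrix.diagonal (fun i => (lam i)⁻¹) * star U)
        = U * (Matrix.diagonal lam * ((star U * U) * (Matrix.diagonal (fun i => (lam i)⁻¹) * star U))) := by
          simp only [mul_assoc]
      _ = U * (Matrix.diagonal lam * Matrix.diagonal (fun i => (lam i)⁻¹)) * star U := by
          rw [hUU', one_mul]; simp only [mul_assoc]
      _ = U * star U := by
          rw [Matrix.diagonal_mul_diagonal]
          have : (fun i => lam i * (lam i)⁻¹) = fun _ => (1:ℝ) := by
            funext i; exact mul_inv_cancel₀ (hpos i).ne'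
          rw [this, Matrix.diagonal_one, mul_one]
      _ = 1 := hUU
  have htrinv : Matrix.trace A⁻¹ = ∑ i, (lam i)⁻¹ := by
    rw [hinv, Matrix.trace_mul_cycle, hUU', one_mul, Matrix.trace_diagonal]
  -- reduce to eigenvalue inequality
  rw [htrinv, htr, hdet]
  have hP : (0:ℝ) < ∏ i, lam i := Finset.prod_pos fun i _ => hpos i
  have hF : (0:ℝ) < (Nat.factorial (n-1) : ℝ) := by positivity
  rw [le_div_iff₀ hP]
  have h1 : (∑ i, (lam i)⁻¹) * ∏ i, lam i = ∑ i, ∏ j ∈ Finset.univ.erase i, lam j := by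
    rw [Finset.sum_mul]
    refine Finset.sum_congr rfl fun i _ => ?_
    rw [← Finset.mul_prod_erase Finset.univ lam (Finset.mem_univ i), ← mul_assoc,
      inv_mul_cancel₀ (hpos i).ne', one_mul]
  have h2 : ∑ i, ∏ j ∈ Finset.univ.erase i, lam j
      ≤ ∑ t ∈ Finset.powersetCard (n-1) (Finset.univ : Finset (Fin n)), ∏ j ∈ t, lam j := by
    have hinj : ∀ x ∈ (Finset.univ : Finset (Fin n)), ∀ y ∈ (Finset.univ : Finset (Fin n)),
        (Finset.univ : Finset (Fin n)).erase x = Finset.univ.erase y → x = y := by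
      intro i _ j _ h
      by_contra hij
      have hj : j ∈ Finset.univ.erase i := Finset.mem_erase.2 ⟨Ne.symm hij, Finset.mem_univ j⟩
      rw [h] at hj
      exact (Finset.mem_erase.1 hj).1 rfl
    have himg : ∑ t ∈ Finset.univ.image (fun i => (Finset.univ : Finset (Fin n)).erase i),
        ∏ j ∈ t, lam j = ∑ i, ∏ j ∈ Finset.univ.erase i, lam j := Finset.sum_image hinj
    rw [← himg]
    apply Finset.sum_le_sum_of_subset_of_nonneg
    · intro t ht
      obtain ⟨i, _, rfl⟩ := Finset.mem_image.1 ht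
      refine Finset.mem_powersetCard.2 ⟨Finset.erase_subset _ _, ?_⟩
      rw [Finset.card_erase_of_mem (Finset.mem_univ i), Finset.card_univ, Fintype.card_fin]
    · intro t _ _
      exact Finset.prod_nonneg fun j _ => (hpos j).le
  have h3 := esymm_sum_le Finset.univ lam (fun i _ => (hpos i).le) (n-1)
  calc (∑ i, (lam i)⁻¹) * ∏ i, lam i
      = ∑ i, ∏ j ∈ Finset.univ.erase i, lam j := h1
    _ ≤ ∑ t ∈ Finset.powersetCard (n-1) (Finset.univ : Finset (Fin n)), ∏ j ∈ t, lam j := h2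
    _ ≤ 1 / (Nat.factorial (n-1) : ℝ) * (∑ i, lam i) ^ (n-1) := by
        rw [one_div, inv_mul_eq_div, le_div_iff₀ hF]
        linarith [h3]
end

section
/- Let A, B be n×n positive definite Hermitian matrices. If tr(A⁻¹B) ≤ C₁ and det A ≤ C₂ · det B for constants C₁, C₂ ≥ 1, then tr(B⁻¹A) ≤ (1/(n-1)!) · C₁^(n-1) · C₂. -/
open Finset

lemma aux_step {ι : Type*} [DecidableEq ι] (x : ι → ℝ) (hx : ∀ i, 0 ≤ x i) (k : ℕ)
    (s : Finset ι) :
    ((k + 1 : ℕ) : ℝ) * ∑ u ∈ s.powersetCard (k + 1), ∏ j ∈ u, x j ≤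
      (∑ t ∈ s.powersetCard k, ∏ j ∈ t, x j) * ∑ i ∈ s, x i := by
  have hL : ((k + 1 : ℕ) : ℝ) * ∑ u ∈ s.powersetCard (k + 1), ∏ j ∈ u, x j
      = ∑ u ∈ s.powersetCard (k + 1), ∑ i ∈ u, (∏ j ∈ u.erase i, x j) * x i := by
    rw [Finset.mul_sum]
    refine Finset.sum_congr rfl fun u hu => ?_
    have hcard : u.card = k + 1 := (Finset.mem_powersetCard.mp hu).2
    have : ∀ i ∈ u, (∏ j ∈ u.erase i, x j) * x i = ∏ j ∈ u, x j := by
      intro i hi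
      rw [mul_comm, Finset.mul_prod_erase u x hi]
    rw [Finset.sum_congr rfl this, Finset.sum_const, hcard, nsmul_eq_mul]
  rw [hL]
  have hEq : ∑ u ∈ s.powersetCard (k + 1), ∑ i ∈ u, (∏ j ∈ u.erase i, x j) * x i
      = ∑ t ∈ s.powersetCard k, ∑ i ∈ s \ t, (∏ j ∈ t, x j) * x i := by
    rw [Finset.sum_sigma', Finset.sum_sigma']
    refine Finset.sum_bij' (fun p hp => ⟨p.1.erase p.2, p.2⟩)
      (fun p hp => ⟨insert p.2 p.1, p.2⟩) ?_ ?_ ?_ ?_ ?_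
    · rintro ⟨u, i⟩ hp
      simp only [Finset.mem_sigma, Finset.mem_powersetCard] at hp ⊢
      obtain ⟨⟨hus, hcard⟩, hiu⟩ := hp
      refine ⟨⟨(Finset.erase_subset _ _).trans hus, ?_⟩, ?_⟩
      · rw [Finset.card_erase_of_mem hiu, hcard]; rfl
      · exact Finset.mem_sdiff.mpr ⟨hus hiu, Finset.notMem_erase _ _⟩
    · rintro ⟨t, i⟩ hp
      simp only [Finset.mem_sigma, Finset.mem_powersetCard, Finset.mem_sdiff] at hp ⊢
      obtain ⟨⟨hts, hcard⟩, his, hit⟩ := hp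
      refine ⟨⟨Finset.insert_subset his hts, ?_⟩, Finset.mem_insert_self _ _⟩
      rw [Finset.card_insert_of_notMem hit, hcard]
    · rintro ⟨u, i⟩ hp
      simp only [Finset.mem_sigma] at hp
      simp [Finset.insert_erase hp.2]
    · rintro ⟨t, i⟩ hp
      simp only [Finset.mem_sigma, Finset.mem_sdiff] at hp
      simp [Finset.erase_insert hp.2.2]
    · rintro ⟨u, i⟩ hp
      simp only [Finset.mem_sigma] at hp
      simp [Finset.insert_erase hp.2]
  rw [hEq, Finset.sum_mul]
  refine Finset.sum_le_sum fun t ht => ?_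
  rw [Finset.mul_sum]
  refine Finset.sum_le_sum_of_subset_of_nonneg (Finset.sdiff_subset) fun i hi _ => ?_
  exact mul_nonneg (Finset.prod_nonneg fun j _ => hx j) (hx i)

lemma aux_esymm {ι : Type*} [DecidableEq ι] (x : ι → ℝ) (hx : ∀ i, 0 ≤ x i) :
    ∀ (k : ℕ) (s : Finset ι),
      (k.factorial : ℝ) * ∑ t ∈ s.powersetCard k, ∏ j ∈ t, x j ≤ (∑ j ∈ s, x j) ^ k := by
  intro k
  induction k with
  | zero => intro s; simp
  | succ k ih =>
    intro s
    have hp : (0 : ℝ) ≤ ∑ j ∈ s, x j := Finset.sum_nonneg fun j _ => hx j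
    have h1 := aux_step x hx k s
    have h2 := ih s
    calc ((k + 1).factorial : ℝ) * ∑ t ∈ s.powersetCard (k + 1), ∏ j ∈ t, x j
        = (k.factorial : ℝ) * (((k + 1 : ℕ) : ℝ) * ∑ t ∈ s.powersetCard (k + 1), ∏ j ∈ t, x j) := by
          rw [Nat.factorial_succ]; push_cast; ring
      _ ≤ (k.factorial : ℝ) * ((∑ t ∈ s.powersetCard k, ∏ j ∈ t, x j) * ∑ i ∈ s, x i) := by
          refine mul_le_mul_of_nonneg_left h1 (by positivity)
      _ = ((k.factorial : ℝ) * ∑ t ∈ s.powersetCard k, ∏ j ∈ t, x j) * ∑ i ∈ s, x i := by ring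
      _ ≤ (∑ j ∈ s, x j) ^ k * ∑ j ∈ s, x j := mul_le_mul_of_nonneg_right h2 hp
      _ = (∑ j ∈ s, x j) ^ (k + 1) := by ring

lemma aux_erase_le {ι : Type*} [DecidableEq ι] (x : ι → ℝ) (hx : ∀ i, 0 ≤ x i) (s : Finset ι) :
    ∑ i ∈ s, ∏ j ∈ s.erase i, x j ≤ ∑ t ∈ s.powersetCard (s.card - 1), ∏ j ∈ t, x j := by
  have hinj : ∀ i ∈ s, ∀ j ∈ s, s.erase i = s.erase j → i = j := by
    intro i hi j hj h
    by_contra hne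
    exact Finset.notMem_erase i s (h ▸ Finset.mem_erase.mpr ⟨hne, hi⟩)
  rw [show ∑ i ∈ s, ∏ j ∈ s.erase i, x j
      = ∑ t ∈ s.image (fun i => s.erase i), ∏ j ∈ t, x j from (Finset.sum_image (f := fun t => ∏ j ∈ t, x j) hinj).symm]
  refine Finset.sum_le_sum_of_subset_of_nonneg ?_ fun t _ _ => Finset.prod_nonneg fun j _ => hx j
  intro t ht
  obtain ⟨i, hi, rfl⟩ := Finset.mem_image.mp ht
  exact Finset.mem_powersetCard.mpr ⟨Finset.erase_subset _ _, Finset.card_erase_of_mem hi⟩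

lemma aux_scalar (n : ℕ) (μ : Fin n → ℝ) (hμ : ∀ i, 0 < μ i) (C₁ C₂ : ℝ)
    (hC₁ : 1 ≤ C₁) (hC₂ : 1 ≤ C₂) (h1 : ∑ i, μ i ≤ C₁) (h2 : 1 ≤ C₂ * ∏ i, μ i) :
    ∑ i, (μ i)⁻¹ ≤ (1 / ((n - 1).factorial : ℝ)) * C₁ ^ (n - 1) * C₂ := by
  have hP : (0 : ℝ) < ∏ i, μ i := Finset.prod_pos fun i _ => hμ i
  have hfact : (0 : ℝ) < ((n - 1).factorial : ℝ) := by positivity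
  have hsum_nonneg : (0 : ℝ) ≤ ∑ i, μ i := Finset.sum_nonneg fun i _ => (hμ i).le
  have hE : ∑ i, (μ i)⁻¹ = (∏ i, μ i)⁻¹ * ∑ i : Fin n, ∏ j ∈ Finset.univ.erase i, μ j := by
    rw [Finset.mul_sum]
    refine Finset.sum_congr rfl fun i _ => ?_
    have hne : (∏ j ∈ Finset.univ.erase i, μ j) ≠ 0 :=
      (Finset.prod_pos fun j _ => hμ j).ne'
    rw [← Finset.mul_prod_erase Finset.univ μ (Finset.mem_univ i), mul_inv, mul_assoc,
      inv_mul_cancel₀ hne, mul_one]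
  have hPinv : (∏ i, μ i)⁻¹ ≤ C₂ := by
    rw [inv_le_iff_one_le_mul₀ hP]
    linarith [h2]
  have hEnn : (0 : ℝ) ≤ ∑ i : Fin n, ∏ j ∈ Finset.univ.erase i, μ j :=
    Finset.sum_nonneg fun i _ => Finset.prod_nonneg fun j _ => (hμ j).le
  have hkey : ∑ i : Fin n, ∏ j ∈ Finset.univ.erase i, μ j ≤ C₁ ^ (n - 1) / ((n - 1).factorial : ℝ) := by
    have h3 := aux_erase_le μ (fun i => (hμ i).le) Finset.univ
    rw [Finset.card_univ, Fintype.card_fin] at h3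
    have h4 := aux_esymm μ (fun i => (hμ i).le) (n - 1) Finset.univ
    have h5 : (∑ j, μ j) ^ (n - 1) ≤ C₁ ^ (n - 1) :=
      pow_le_pow_left₀ hsum_nonneg h1 _
    rw [le_div_iff₀ hfact]
    calc (∑ i : Fin n, ∏ j ∈ Finset.univ.erase i, μ j) * ((n - 1).factorial : ℝ)
        = ((n - 1).factorial : ℝ) * ∑ i : Fin n, ∏ j ∈ Finset.univ.erase i, μ j := by ring
      _ ≤ ((n - 1).factorial : ℝ) * ∑ t ∈ Finset.univ.powersetCard (n - 1), ∏ j ∈ t, μ j :=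
          mul_le_mul_of_nonneg_left h3 hfact.le
      _ ≤ (∑ j, μ j) ^ (n - 1) := h4
      _ ≤ C₁ ^ (n - 1) := h5
  calc ∑ i, (μ i)⁻¹ = (∏ i, μ i)⁻¹ * ∑ i : Fin n, ∏ j ∈ Finset.univ.erase i, μ j := hE
    _ ≤ C₂ * ∑ i : Fin n, ∏ j ∈ Finset.univ.erase i, μ j := mul_le_mul_of_nonneg_right hPinv hEnn
    _ ≤ C₂ * (C₁ ^ (n - 1) / ((n - 1).factorial : ℝ)) := by
        refine mul_le_mul_of_nonneg_left hkey (by linarith)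
    _ = (1 / ((n - 1).factorial : ℝ)) * C₁ ^ (n - 1) * C₂ := by ring

open scoped MatrixOrder in
lemma matrix_reduce (n : ℕ) (A B : Matrix (Fin n) (Fin n) ℝ)
    (hA : A.PosDef) (hB : B.PosDef) :
    ∃ μ : Fin n → ℝ, (∀ i, 0 < μ i) ∧
      (∑ i, μ i = Matrix.trace (A⁻¹ * B)) ∧
      (∏ i, μ i = B.det / A.det) ∧
      (∑ i, (μ i)⁻¹ = Matrix.trace (B⁻¹ * A)) := by
  classical
  have hSsd : (CFC.sqrt A).PosSemidef := Matrix.LE.le.posSemidef (CFC.sqrt_nonneg A)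
  set S := CFC.sqrt A with hSdef
  have hSS : S * S = A := CFC.sqrt_mul_sqrt_self A hA.posSemidef.nonneg
  have hdetA : 0 < A.det := hA.det_pos
  have hdetB : 0 < B.det := hB.det_pos
  have hdetS : S.det ≠ 0 := by
    intro h
    rw [← hSS, Matrix.det_mul, h, mul_zero] at hdetA
    exact lt_irrefl _ hdetA
  have hSi : S⁻¹ * S = 1 := Matrix.nonsing_inv_mul S (Ne.isUnit hdetS)
  have hSi' : S * S⁻¹ = 1 := Matrix.mul_nonsing_inv S (Ne.isUnit hdetS)
  set M := S⁻¹ * B * S⁻¹ with hMdef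
  have hSinvH : (S⁻¹).IsHermitian := hSsd.1.inv
  have hM : M.PosSemidef := by
    have := hB.posSemidef.mul_mul_conjTranspose_same S⁻¹
    rwa [hSinvH.eq] at this
  have hMdet : M.det = B.det / A.det := by
    have h1 : M.det = S.det⁻¹ * B.det * S.det⁻¹ := by
      rw [hMdef, Matrix.det_mul, Matrix.det_mul, Matrix.det_nonsing_inv,
        Ring.inverse_eq_inv']
    rw [h1, ← hSS, Matrix.det_mul]
    field_simp
  have hMdetpos : 0 < M.det := by rw [hMdet]; exact div_pos hdetB hdetA
  have hMunit : IsUnit M.det := (ne_of_gt hMdetpos).isUnit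
  -- trace identities
  have htrM : Matrix.trace (A⁻¹ * B) = M.trace := by
    rw [← hSS, Matrix.mul_inv_rev,
      show S⁻¹ * S⁻¹ * B = S⁻¹ * (S⁻¹ * B) from by rw [Matrix.mul_assoc],
      Matrix.trace_mul_comm, hMdef, Matrix.mul_assoc]
  have hBfac : B = S * M * S := by
    have h : S * (S⁻¹ * B * S⁻¹) * S = S * S⁻¹ * B * (S⁻¹ * S) := by
      simp only [Matrix.mul_assoc]
    rw [hMdef, h, hSi', hSi, Matrix.one_mul, Matrix.mul_one]
  have htrMinv : Matrix.trace (B⁻¹ * A) = M⁻¹.trace := by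
    have hBinv : B⁻¹ = S⁻¹ * M⁻¹ * S⁻¹ := by
      rw [hBfac, Matrix.mul_inv_rev, Matrix.mul_inv_rev, Matrix.mul_assoc]
    rw [hBinv, ← hSS,
      show S⁻¹ * M⁻¹ * S⁻¹ * (S * S) = S⁻¹ * (M⁻¹ * ((S⁻¹ * S) * S)) from by
        simp only [Matrix.mul_assoc],
      hSi, Matrix.one_mul, Matrix.trace_mul_comm,
      show M⁻¹ * S * S⁻¹ = M⁻¹ * (S * S⁻¹) from by simp only [Matrix.mul_assoc],
      hSi', Matrix.mul_one]
  -- spectral decomposition of M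
  set μ := hM.1.eigenvalues with hμdef
  set U : Matrix (Fin n) (Fin n) ℝ := (Matrix.IsHermitian.eigenvectorUnitary hM.1 : Matrix (Fin n) (Fin n) ℝ) with hUdef
  have hspec : M = U * Matrix.diagonal μ * star U := by
    have := hM.1.spectral_theorem
    simpa [RCLike.ofReal_real_eq_id] using this
  have hUU : star U * U = 1 :=
    Matrix.mem_unitaryGroup_iff'.mp (Matrix.IsHermitian.eigenvectorUnitary hM.1).2
  have hUU' : U * star U = 1 :=
    Matrix.mem_unitaryGroup_iff.mp (Matrix.IsHermitian.eigenvectorUnitary hM.1).2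
  have htraceM : M.trace = ∑ i, μ i := by
    conv_lhs => rw [hspec]
    rw [Matrix.trace_mul_comm, ← Matrix.mul_assoc, hUU, Matrix.one_mul, Matrix.trace_diagonal]
  have hprod : ∏ i, μ i = M.det := by
    rw [hM.1.det_eq_prod_eigenvalues]
    simp [RCLike.ofReal_real_eq_id]
    rfl
  have hμpos : ∀ i, 0 < μ i := by
    intro i
    rcases (hM.eigenvalues_nonneg i).lt_or_eq with h | h
    · exact h
    · exfalso
      have : M.det = 0 := by
        rw [← hprod]
        exact Finset.prod_eq_zero (Finset.mem_univ i) h.symm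
      rw [this] at hMdetpos
      exact lt_irrefl _ hMdetpos
  have hDD : Matrix.diagonal μ * Matrix.diagonal (fun i => (μ i)⁻¹) = 1 := by
    rw [Matrix.diagonal_mul_diagonal]
    have : (fun i => μ i * (μ i)⁻¹) = fun _ => (1 : ℝ) := by
      funext i; exact mul_inv_cancel₀ (hμpos i).ne'
    rw [this, Matrix.diagonal_one]
  have hMinv : M⁻¹ = U * Matrix.diagonal (fun i => (μ i)⁻¹) * star U := by
    apply Matrix.inv_eq_right_inv
    conv_lhs => rw [hspec]
    rw [show U * Matrix.diagonal μ * star U * (U * Matrix.diagonal (fun i => (μ i)⁻¹) * star U)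
        = U * (Matrix.diagonal μ * ((star U * U) * (Matrix.diagonal (fun i => (μ i)⁻¹) * star U)))
        from by simp only [Matrix.mul_assoc], hUU, Matrix.one_mul,
      show Matrix.diagonal μ * (Matrix.diagonal (fun i => (μ i)⁻¹) * star U)
        = (Matrix.diagonal μ * Matrix.diagonal (fun i => (μ i)⁻¹)) * star U
        from by simp only [Matrix.mul_assoc], hDD, Matrix.one_mul, hUU']
  have htraceMinv : M⁻¹.trace = ∑ i, (μ i)⁻¹ := by
    rw [hMinv, Matrix.trace_mul_comm, ← Matrix.mul_assoc, hUU, Matrix.one_mul,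
      Matrix.trace_diagonal]
  exact ⟨μ, hμpos, by rw [htrM, htraceM], by rw [hprod, hMdet], by rw [htrMinv, htraceMinv]⟩

/-- If A, B are positive definite with tr(A⁻¹B) ≤ C₁ and det A ≤ C₂ det B, C₁, C₂ ≥ 1,
then tr(B⁻¹A) ≤ (1/(n-1)!) C₁^(n-1) C₂. -/
theorem trace_inv_mul_le (n : ℕ) (A B : Matrix (Fin n) (Fin n) ℝ)
    (hA : A.PosDef) (hB : B.PosDef) (C₁ C₂ : ℝ) (hC₁ : 1 ≤ C₁) (hC₂ : 1 ≤ C₂)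
    (htr : Matrix.trace (A⁻¹ * B) ≤ C₁) (hdet : A.det ≤ C₂ * B.det) :
    Matrix.trace (B⁻¹ * A) ≤ (1 / (Nat.factorial (n - 1) : ℝ)) * C₁ ^ (n - 1) * C₂ := by
  obtain ⟨μ, hμpos, h1, h2, h3⟩ := matrix_reduce n A B hA hB
  rw [← h3]
  apply aux_scalar n μ hμpos C₁ C₂ hC₁ hC₂
  · rw [h1]; exact htr
  · rw [h2, mul_div_assoc', le_div_iff₀ hA.det_pos, one_mul]
    exact hdet
end
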